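/- Let h ≠ h∞ be a hole, and suppose there is a cycle C* in 𝒞* other than C*_0 that either strictly encloses h* or passes through h*. Then the unique edge of the cotree T* that exits Vor*(v) at C* lies on the path from h∞* to h* in T*. -/
import Mathlib


open scoped Classical

/-- A finite connected directed planar embedded multigraph, presented by a rotation system
(darts with reversal and a counterclockwise rotation around each vertex), together with its
faces and Euler's formula (which forces the embedding to be planar). Every arc has an
antiparallel reverse arc embedded on the same curve. -/
structure PlanarGraph where
  /-- vertices -/
  V : Type
  /-- arcs (darts) -/
  A : Type
  /-- faces -/
  F : Type
  fintypeV : Fintype V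
  fintypeA : Fintype A
  fintypeF : Fintype F
  decV : DecidableEq V
  decA : DecidableEq A
  decF : DecidableEq F
  tail : A → V
  head : A → V
  /-- arc reversal -/
  rev : A → A
  rev_rev : ∀ a, rev (rev a) = a
  rev_ne : ∀ a, rev a ≠ a
  tail_rev : ∀ a, tail (rev a) = head a
  /-- rotation: the next arc, counterclockwise, among the arcs with the same tail -/
  rot : Equiv.Perm A
  tail_rot : ∀ a, tail (rot a) = tail a
  /-- the face lying to the left of an arc -/
  left : A → F
  /-- along the boundary walk of a face, the arc following `a` is `rot (rev a)` -/
  left_faceNext : ∀ a, left (rot (rev a)) = left a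
  /-- the boundary of each face is a single orbit of the face-walk -/
  face_orbit : ∀ a b, left a = left b → ∃ n : ℕ, (fun x => rot (rev x))^[n] a = b
  left_surjective : Function.Surjective left
  /-- the graph is connected -/
  connected : ∀ u w : V, Relation.ReflTransGen (fun x y => ∃ a, tail a = x ∧ head a = y) u w
  /-- Euler's formula `|V| - |E| + |F| = 2` (where `|E| = |A|/2`): the embedding is planar -/
  euler : 2 * @Fintype.card V fintypeV + 2 * @Fintype.card F fintypeF
            = @Fintype.card A fintypeA + 4

attribute [instance] PlanarGraph.fintypeV PlanarGraph.fintypeA PlanarGraph.fintypeF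
attribute [instance] PlanarGraph.decV PlanarGraph.decA PlanarGraph.decF

namespace PlanarGraph

variable (G : PlanarGraph)

/-- the face to the right of an arc -/
def right (a : G.A) : G.F := G.left (G.rev a)

/-- the tail of the dual arc `a*`: the face to the left of `a` -/
def dualTail (a : G.A) : G.F := G.left a

/-- the head of the dual arc `a*`: the face to the right of `a` -/
def dualHead (a : G.A) : G.F := G.right a

/-- a vertex is incident to a face -/
def Incident (w : G.V) (f : G.F) : Prop := ∃ a, G.tail a = w ∧ G.left a = f

/-- the dual arc `a*` is incident to the dual vertex (face) `φ` -/
def DualIncident (a : G.A) (φ : G.F) : Prop := G.dualTail a = φ ∨ G.dualHead a = φ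

/-- `IsWalk p u w`: the list of arcs `p` forms a walk from `u` to `w` in `G` -/
def IsWalk : List G.A → G.V → G.V → Prop
  | [], u, w => u = w
  | a :: p, u, w => G.tail a = u ∧ IsWalk p (G.head a) w

/-- the vertices visited by a walk starting at `u` -/
def walkVertices (p : List G.A) (u : G.V) : List G.V := u :: p.map G.head

/-- `IsDualWalk s p φ ψ`: the arcs of `p` lie in `s` and their duals form a walk from the
face `φ` to the face `ψ` in the dual graph `P*` -/
def IsDualWalk (s : Set G.A) : List G.A → G.F → G.F → Prop
  | [], φ, ψ => φ = ψ
  | a :: p, φ, ψ => a ∈ s ∧ G.dualTail a = φ ∧ IsDualWalk s p (G.dualHead a) ψ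

/-- the length of a walk with respect to the arc lengths `len` -/
def walkLen (len : G.A → ℝ) (p : List G.A) : ℝ := (p.map len).sum

/-- `d` is the shortest-path distance of `G` with respect to the arc lengths `len` -/
def IsSPDist (len : G.A → ℝ) (d : G.V → G.V → ℝ) : Prop :=
  ∀ u w : G.V, (∃ p, G.IsWalk p u w ∧ G.walkLen len p = d u w) ∧
    ∀ p, G.IsWalk p u w → d u w ≤ G.walkLen len p

/-- there are no negative-length cycles -/
def NoNegCycle (len : G.A → ℝ) : Prop :=
  ∀ (u : G.V) (p : List G.A), G.IsWalk p u u → 0 ≤ G.walkLen len p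

/-- shortest paths are unique -/
def UniqueShortestPaths (len : G.A → ℝ) (d : G.V → G.V → ℝ) : Prop :=
  ∀ (u w : G.V) (p q : List G.A), G.IsWalk p u w → G.IsWalk q u w →
    G.walkLen len p = d u w → G.walkLen len q = d u w → p = q

/-- vertex-to-vertex distances are pairwise distinct -/
def GenericDistances (d : G.V → G.V → ℝ) : Prop :=
  ∀ u w u' w' : G.V, u ≠ w → u' ≠ w' → d u w = d u' w' → u = u' ∧ w = w'

/-- the additively weighted Voronoi cell of a site `u` among the sites `S`:
the vertices strictly closer (in additively weighted distance) to `u` than to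
any other site of `S` -/
def VorCell (d : G.V → G.V → ℝ) (S : Set G.V) (ω : G.V → ℝ) (u : G.V) : Set G.V :=
  {w | u ∈ S ∧ ∀ u' ∈ S, u' ≠ u → ω u + d u w < ω u' + d u' w}

/-- the bisector `β*(u,v)` (as a set of (duals of) arcs): duals of the arcs whose tail is
closer to `u` and whose head is closer to `v` in the two-site diagram `VD({u,v},ω)` -/
def bisector (d : G.V → G.V → ℝ) (u v : G.V) (ωu ωv : ℝ) : Set G.A :=
  {a | ωu + d u (G.tail a) < ωv + d v (G.tail a) ∧
       ωv + d v (G.head a) < ωu + d u (G.head a)}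

/-- `s` is a simple cycle in the dual graph `P*` -/
def IsSimpleDualCycle (s : Set G.A) : Prop :=
  s.Nonempty ∧
  Set.InjOn G.dualTail s ∧
  Set.InjOn G.dualHead s ∧
  (∀ a ∈ s, ∃ b ∈ s, G.dualTail b = G.dualHead a) ∧
  (∀ a ∈ s, ∃ b ∈ s, G.dualHead b = G.dualTail a) ∧
  ∀ a ∈ s, ∀ b ∈ s,
    Relation.ReflTransGen (fun x y => x ∈ s ∧ y ∈ s ∧ G.dualHead x = G.dualTail y) a b

/-- `t` is (the arc set of) a contiguous segment of the dual cycle `s` -/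
def IsSegmentOf (t s : Set G.A) : Prop :=
  t ⊆ s ∧ ∃ (f : ℕ → G.A) (n : ℕ),
    (∀ k < n, f k ∈ s) ∧
    (∀ k, k + 1 < n → G.dualHead (f k) = G.dualTail (f (k + 1))) ∧
    t = {a | ∃ k < n, f k = a}

/-- `f` enumerates the arc set `s` as a (simple) closed walk of length `n` in the dual graph -/
def IsCyclicEnum (s : Set G.A) (f : ℕ → G.A) (n : ℕ) : Prop :=
  0 < n ∧ (∀ k < n, f k ∈ s) ∧ (∀ a ∈ s, ∃ k < n, f k = a) ∧
  (∀ k l, k < n → l < n → f k = f l → k = l) ∧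
  (∀ k, k + 1 < n → G.dualHead (f k) = G.dualTail (f (k + 1))) ∧
  G.dualHead (f (n - 1)) = G.dualTail (f 0)

/-- all faces of `G` except the holes are triangles -/
def Triangulated (Holes : Set G.F) : Prop :=
  ∀ f, f ∉ Holes → Set.ncard {a : G.A | G.left a = f} = 3

/-- the cell of the site `s₁` in the additively weighted Voronoi diagram of the three
sites `s₁, s₂, s₃` with respective weights `w₁, w₂, w₃` -/
def cell3 (d : G.V → G.V → ℝ) (s₁ s₂ s₃ : G.V) (w₁ w₂ w₃ : ℝ) : Set G.V :=
  {w | w₁ + d s₁ w < w₂ + d s₂ w ∧ w₁ + d s₁ w < w₃ + d s₃ w}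

/-- `f` is a trichromatic face of `VD_x`, the Voronoi diagram of the sites `r, g, b` with
respective weights `x, ωg, ωb`: it is incident to a vertex of each of the three cells -/
def Trichromatic3 (d : G.V → G.V → ℝ) (r g b : G.V) (x ωg ωb : ℝ) (f : G.F) : Prop :=
  (∃ p ∈ G.cell3 d r g b x ωg ωb, G.Incident p f) ∧
  (∃ p ∈ G.cell3 d g r b ωg x ωb, G.Incident p f) ∧
  (∃ p ∈ G.cell3 d b r g ωb x ωg, G.Incident p f)

/-- `δ̃^{rc}(w) = ω(c) + d(c,w) - d(r,w)` and `Δ^r(w) = min (δ̃^{rg}(w)) (δ̃^{rb}(w))`: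
the largest weight that can be assigned to `r` so that `w` is in the cell of `r` -/
def DeltaVertex (d : G.V → G.V → ℝ) (r g b : G.V) (ωg ωb : ℝ) (w : G.V) : ℝ :=
  min (ωg + d g w - d r w) (ωb + d b w - d r w)

/-- `Δ^r` of an arc: the maximum of `Δ^r` over its two endpoints (also the value
attached to the dual arc) -/
def DeltaArc (d : G.V → G.V → ℝ) (r g b : G.V) (ωg ωb : ℝ) (a : G.A) : ℝ :=
  max (G.DeltaVertex d r g b ωg ωb (G.tail a)) (G.DeltaVertex d r g b ωg ωb (G.head a))

/-- `T` is (the arc set of) the shortest-path tree of `G` rooted at `c`,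
oriented away from the root -/
def IsSPTree (len : G.A → ℝ) (d : G.V → G.V → ℝ) (c : G.V) (T : Set G.A) : Prop :=
  (∀ a ∈ T, d c (G.head a) = d c (G.tail a) + len a) ∧
  (∀ a ∈ T, G.rev a ∉ T) ∧
  (∀ w : G.V, w ≠ c → ∃! a, a ∈ T ∧ G.head a = w) ∧
  (∀ a ∈ T, G.head a ≠ c)

/-- the number of edges on the path between two dual vertices in the cotree of `T`
(the spanning tree of the dual formed by the duals of the edges not in `T`) -/
noncomputable def cotreeDist (T : Set G.A) (φ ψ : G.F) : ℕ :=
  sInf {n : ℕ | ∃ p : List G.A,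
    G.IsDualWalk {a : G.A | a ∉ T ∧ G.rev a ∉ T} p φ ψ ∧ p.length = n}

/-- the dart scanned after `a` in a counterclockwise-first depth-first traversal of the
spanning tree `T`: tree darts are traversed and the scan resumes counterclockwise after the
reverse dart; non-tree darts are skipped -/
noncomputable def dfsNext (T : Set G.A) (a : G.A) : G.A :=
  if a ∈ T ∨ G.rev a ∈ T then G.rot (G.rev a) else G.rot a

/-- `pre` is the preorder labeling of all arcs of `G` (equivalently, of the artificial
leaves `x_{uv}` attached immediately before each arc `uv`) induced by a
counterclockwise-first depth-first search of the tree `T` rooted at `c`,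
started from the dart `a₀` -/
def IsCCWPreorder (T : Set G.A) (c : G.V) (a₀ : G.A) (pre : G.A → ℕ) : Prop :=
  G.tail a₀ = c ∧ pre a₀ = 0 ∧ Function.Injective pre ∧
  (∀ a : G.A, pre a < Fintype.card G.A) ∧
  ∀ a : G.A, (G.dfsNext T)^[pre a] a₀ = a

/-- the successor of an arc in the boundary walk of the face to its left -/
def faceNext (a : G.A) : G.A := G.rot (G.rev a)

/-- the number of face-walk steps from the arc `a` to the arc `b` (both on the boundary of
the same face), i.e. the position of `b` in the boundary walk of the face starting at `a` -/
noncomputable def faceIdx (a b : G.A) : ℕ :=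
  if h : ∃ k : ℕ, (G.faceNext)^[k] a = b then Nat.find h else 0

/-- the sets of vertices `S` and `S'` are separated along the boundary of the face `h`:
going around `h` starting from some boundary arc, all occurrences of vertices of `S`
come before all occurrences of vertices of `S'` -/
def SeparatedAlong (h : G.F) (S S' : Set G.V) : Prop :=
  ∃ a₀, G.left a₀ = h ∧ ∃ m : ℕ,
    (∀ b, G.left b = h → G.tail b ∈ S → G.faceIdx a₀ b < m) ∧
    (∀ b, G.left b = h → G.tail b ∈ S' → m ≤ G.faceIdx a₀ b)

/-- the bisector `β*(S₁,S₂)`: duals of arcs whose tail lies in the cell of a site of `S₁`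
and whose head lies in the cell of a site of `S₂`, in the diagram `VD(S₁ ∪ S₂, ω)` -/
def groupBisector (d : G.V → G.V → ℝ) (S₁ S₂ : Set G.V) (ω : G.V → ℝ) : Set G.A :=
  {a : G.A | (∃ s ∈ S₁, G.tail a ∈ G.VorCell d (S₁ ∪ S₂) ω s) ∧
             (∃ s ∈ S₂, G.head a ∈ G.VorCell d (S₁ ∪ S₂) ω s)}

/-- `z` lies strictly between `x` and `y` in the boundary walk of their common face -/
def StrictBetween (x y z : G.A) : Prop :=
  0 < G.faceIdx x z ∧ G.faceIdx x z < G.faceIdx x y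

/-- the closed dual walk enumerated by `f` (cyclically, of length `n`) is non-self-crossing:
at every dual vertex visited more than once, the passages through it do not interleave in
the rotation around that dual vertex -/
def EnumNonSelfCrossing (f : ℕ → G.A) (n : ℕ) : Prop :=
  ∀ i j, i < n → j < n → i ≠ j →
    G.dualHead (f i) = G.dualHead (f j) →
    (G.StrictBetween (G.rev (f i)) (f ((i + 1) % n)) (G.rev (f j)) ↔
     G.StrictBetween (G.rev (f i)) (f ((i + 1) % n)) (f ((j + 1) % n)))

/-- a face of `G` belongs to a set `Vor` of vertices if all its incident vertices do -/
def FaceBelongs (Vor : Set G.V) (f : G.F) : Prop := ∀ w : G.V, G.Incident w f → w ∈ Vor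

/-- the dual arc `a* = f*g*` penetrates `Vor*` at the cycle `C`: the face `f` does not
belong to `Vor`, the face `g` does, and `f*` is a vertex of `C` -/
def PenetratesAt (Vor : Set G.V) (C : Set G.A) (a : G.A) : Prop :=
  ¬ G.FaceBelongs Vor (G.dualTail a) ∧ G.FaceBelongs Vor (G.dualHead a) ∧
  ∃ b ∈ C, G.DualIncident b (G.dualTail a)

/-- the dual arc `a* = f*g*` exits `Vor*` at the cycle `C`: the reversed arc `g*f*`
penetrates at `C` -/
def ExitsAt (Vor : Set G.V) (C : Set G.A) (a : G.A) : Prop :=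
  G.FaceBelongs Vor (G.dualTail a) ∧ ¬ G.FaceBelongs Vor (G.dualHead a) ∧
  ∃ b ∈ C, G.DualIncident b (G.dualHead a)

/-- `K` is a connected component of the complement of the vertex set `Vor` -/
def IsCompOfComplement (Vor K : Set G.V) : Prop :=
  ∃ x, x ∉ Vor ∧ K = {y | Relation.ReflTransGen
    (fun p q => p ∉ Vor ∧ q ∉ Vor ∧ ∃ a : G.A, G.tail a = p ∧ G.head a = q) x y}

/-- the boundary cycle of `Vor*` separating `Vor` from the complement component `K` -/
def boundaryCycle (Vor K : Set G.V) : Set G.A :=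
  {a : G.A | G.tail a ∈ Vor ∧ G.head a ∈ K}

/-- the set `𝒞*` of boundary cycles of `Vor*` -/
def boundaryCycles (Vor : Set G.V) : Set (Set G.A) :=
  {C | ∃ K : Set G.V, G.IsCompOfComplement Vor K ∧ C = G.boundaryCycle Vor K}

/-- `Tstar` is the cotree of the (primal) spanning tree `T`, i.e. the spanning tree of the
dual formed by the duals of the edges of `G` not in `T`, oriented away from `root` -/
def IsCotree (T Tstar : Set G.A) (root : G.F) : Prop :=
  (∀ a ∈ Tstar, a ∉ T ∧ G.rev a ∉ T) ∧
  (∀ a ∈ Tstar, G.rev a ∉ Tstar) ∧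
  (∀ a : G.A, a ∉ T → G.rev a ∉ T → (a ∈ Tstar ∨ G.rev a ∈ Tstar)) ∧
  (∀ φ : G.F, φ ≠ root → ∃! a, a ∈ Tstar ∧ G.dualHead a = φ) ∧
  (∀ a ∈ Tstar, G.dualHead a ≠ root) ∧
  (∀ φ : G.F, ∃ p : List G.A, G.IsDualWalk Tstar p root φ)

end PlanarGraph


set_option linter.unusedSectionVars false
set_option linter.unnecessarySimpa false
set_option linter.unusedVariables false
set_option maxHeartbeats 1000000

section JacquesLemma

variable {A : Type} [Fintype A] [DecidableEq A]

open Equiv Equiv.Perm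

noncomputable def permSetoid (π : Equiv.Perm A) : Setoid A :=
  ⟨π.SameCycle, Equiv.Perm.SameCycle.equivalence (f := π)⟩

noncomputable def permCyc (π : Equiv.Perm A) : ℕ :=
  Nat.card (Quotient (permSetoid π))

lemma sameCycle_exists_nat {π : Equiv.Perm A} {u w : A} (h : π.SameCycle u w) :
    ∃ n : ℕ, (π ^ n) u = w := by
  obtain ⟨i, _, hi⟩ := h.exists_pow_eq'
  exact ⟨i, hi⟩

lemma sameCycle_of_pow {π : Equiv.Perm A} {u w : A} {n : ℕ} (h : (π ^ n) u = w) :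
    π.SameCycle u w := ⟨(n : ℤ), by simpa using h⟩

lemma pow_mul_swap_eq (α : Equiv.Perm A) {x y z : A}
    (hx : ¬ α.SameCycle z x) (hy : ¬ α.SameCycle z y) (n : ℕ) :
    ((α * Equiv.swap x y) ^ n) z = (α ^ n) z := by
  induction n with
  | zero => simp
  | succ m ih =>
    have hzx : (α ^ m) z ≠ x := fun h => hx (sameCycle_of_pow h)
    have hzy : (α ^ m) z ≠ y := fun h => hy (sameCycle_of_pow h)
    rw [pow_succ', Equiv.Perm.mul_apply, ih, Equiv.Perm.mul_apply,
      Equiv.swap_apply_of_ne_of_ne hzx hzy, ← Equiv.Perm.mul_apply, ← pow_succ']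

lemma sameCycle_swap_iff (α : Equiv.Perm A) {x y z w : A}
    (hx : ¬ α.SameCycle z x) (hy : ¬ α.SameCycle z y) :
    α.SameCycle z w ↔ (α * Equiv.swap x y).SameCycle z w := by
  constructor
  · intro h
    obtain ⟨n, hn⟩ := sameCycle_exists_nat h
    exact sameCycle_of_pow (by rw [pow_mul_swap_eq α hx hy n]; exact hn)
  · intro h
    obtain ⟨n, hn⟩ := sameCycle_exists_nat h
    exact sameCycle_of_pow (by rw [← pow_mul_swap_eq α hx hy n]; exact hn)

lemma reach_pair (α : Equiv.Perm A) (x y : A) :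
    ∀ n z, ((α ^ n) z = x ∨ (α ^ n) z = y) →
      (α * Equiv.swap x y).SameCycle z x ∨ (α * Equiv.swap x y).SameCycle z y := by
  intro n
  induction n using Nat.strong_induction_on with
  | _ n ih =>
    intro z hz
    by_cases hzx : z = x
    · exact Or.inl (hzx ▸ Equiv.Perm.SameCycle.refl _ _)
    by_cases hzy : z = y
    · exact Or.inr (hzy ▸ Equiv.Perm.SameCycle.refl _ _)
    match n, hz with
    | 0, hz => simp only [pow_zero, Equiv.Perm.one_apply] at hz; tauto
    | Nat.succ m, hz =>
      have hb : (α * Equiv.swap x y) z = α z := by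
        rw [Equiv.Perm.mul_apply, Equiv.swap_apply_of_ne_of_ne hzx hzy]
      have hstep : (α * Equiv.swap x y).SameCycle z (α z) :=
        sameCycle_of_pow (n := 1) (by simpa using hb)
      rw [pow_succ, Equiv.Perm.mul_apply] at hz
      rcases ih m (Nat.lt_succ_self m) (α z) hz with h | h
      · exact Or.inl (hstep.trans h)
      · exact Or.inr (hstep.trans h)

lemma reach_y (α : Equiv.Perm A) (x y : A) :
    ∀ n z, ¬ α.SameCycle z x → (α ^ n) z = y →
      (α * Equiv.swap x y).SameCycle z y := by
  intro n
  induction n using Nat.strong_induction_on with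
  | _ n ih =>
    intro z hzx hz
    by_cases hzy : z = y
    · exact hzy ▸ Equiv.Perm.SameCycle.refl _ _
    have hzx' : z ≠ x := fun h => hzx (h ▸ Equiv.Perm.SameCycle.refl _ _)
    match n, hz with
    | 0, hz => simp only [pow_zero, Equiv.Perm.one_apply] at hz; exact absurd hz hzy
    | Nat.succ m, hz =>
      have hb : (α * Equiv.swap x y) z = α z := by
        rw [Equiv.Perm.mul_apply, Equiv.swap_apply_of_ne_of_ne hzx' hzy]
      have hstep : (α * Equiv.swap x y).SameCycle z (α z) :=
        sameCycle_of_pow (n := 1) (by simpa using hb)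
      have hcl : ¬ α.SameCycle (α z) x := fun h =>
        hzx ((sameCycle_of_pow (n := 1) (by simp) : α.SameCycle z (α z)).trans h)
      rw [pow_succ, Equiv.Perm.mul_apply] at hz
      exact hstep.trans (ih m (Nat.lt_succ_self m) (α z) hcl hz)

lemma swap_connects (α : Equiv.Perm A) {x y : A} (h : ¬ α.SameCycle x y) :
    (α * Equiv.swap x y).SameCycle x y := by
  have h1 : (α * Equiv.swap x y) x = α y := by
    rw [Equiv.Perm.mul_apply, Equiv.swap_apply_left]
  have hstep : (α * Equiv.swap x y).SameCycle x (α y) :=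
    sameCycle_of_pow (n := 1) (by simpa using h1)
  have hret : (α ^ (orderOf α - 1)) (α y) = y := by
    rw [← Equiv.Perm.mul_apply, ← pow_succ, Nat.sub_add_cancel (orderOf_pos α),
      pow_orderOf_eq_one, Equiv.Perm.one_apply]
  have hcl : ¬ α.SameCycle (α y) x := fun hc =>
    h (((sameCycle_of_pow (n := 1) (by simp) : α.SameCycle y (α y))).trans hc).symm
  exact hstep.trans (reach_y α x y _ (α y) hcl hret)

/-- if `z` is in the cycle of `x` or of `y` w.r.t. `α`, then w.r.t. `α * swap x y`
it is in the cycle of `x` or of `y`. -/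
lemma dirty_reach (α : Equiv.Perm A) {x y z : A}
    (h : α.SameCycle z x ∨ α.SameCycle z y) :
    (α * Equiv.swap x y).SameCycle z x ∨ (α * Equiv.swap x y).SameCycle z y := by
  rcases h with h | h
  · obtain ⟨n, hn⟩ := sameCycle_exists_nat h
    exact reach_pair α x y n z (Or.inl hn)
  · obtain ⟨n, hn⟩ := sameCycle_exists_nat h
    exact reach_pair α x y n z (Or.inr hn)

lemma permCyc_mul_swap_le (α : Equiv.Perm A) {x y : A} (hxy : x ≠ y) :
    permCyc (α * Equiv.swap x y) ≤ permCyc α + 1 := by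
  set β := α * Equiv.swap x y with hβ
  set g : A → (Quotient (permSetoid α)) ⊕ Unit := fun z =>
    if β.SameCycle z x then Sum.inl (Quotient.mk (permSetoid α) x)
    else if α.SameCycle z x ∨ α.SameCycle z y then Sum.inr ()
    else Sum.inl (Quotient.mk (permSetoid α) z) with hg
  -- key dichotomies
  have key : ∀ z z' : A, β.SameCycle z z' → g z = g z' := by
    intro z z' hzz
    by_cases h1 : β.SameCycle z x
    · have h1' : β.SameCycle z' x := hzz.symm.trans h1
      simp [hg, h1, h1']
    · have h1' : ¬ β.SameCycle z' x := fun h => h1 (hzz.trans h)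
      by_cases h2 : α.SameCycle z x ∨ α.SameCycle z y
      · -- dirty z : then z ~β y
        have hzy : β.SameCycle z y := by
          rcases dirty_reach α h2 with h | h
          · exact absurd h h1
          · exact h
        have hz'y : β.SameCycle z' y := hzz.symm.trans hzy
        have h2' : α.SameCycle z' x ∨ α.SameCycle z' y := by
          by_contra hcl
          push_neg at hcl
          exact hcl.2 ((sameCycle_swap_iff α hcl.1 hcl.2).2 hz'y)
        simp [hg, h1, h1', h2, h2']
      · push_neg at h2
        have h2' : ¬ (α.SameCycle z' x ∨ α.SameCycle z' y) := by
          intro hd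
          have hz'y : β.SameCycle z' y := by
            rcases dirty_reach α hd with h | h
            · exact absurd h h1'
            · exact h
          exact h2.2 ((sameCycle_swap_iff α h2.1 h2.2).2 (hzz.trans hz'y))
        have hor : ¬ (α.SameCycle z x ∨ α.SameCycle z y) := by tauto
        have : α.SameCycle z z' := (sameCycle_swap_iff α h2.1 h2.2).2 hzz
        simp only [hg, h1, h1', hor, h2', if_false]
        exact congrArg Sum.inl (Quotient.sound this)
  have hinj : Function.Injective (Quotient.lift g key :
      Quotient (permSetoid β) → (Quotient (permSetoid α)) ⊕ Unit) := by
    intro q q'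
    obtain ⟨z, rfl⟩ := Quotient.exists_rep q
    obtain ⟨z', rfl⟩ := Quotient.exists_rep q'
    intro hq
    have h : g z = g z' := hq
    apply Quotient.sound
    show β.SameCycle z z'
    by_cases h1 : β.SameCycle z x <;> by_cases h1' : β.SameCycle z' x
    · exact h1.trans h1'.symm
    · -- z branch1, z' branch 2 or 3
      by_cases h2' : α.SameCycle z' x ∨ α.SameCycle z' y
      · simp [hg, h1, h1', h2'] at h
      · simp only [hg, h1, if_true, h1', h2', if_false] at h
        have := Quotient.exact (Sum.inl.inj h)
        exact absurd (this : α.SameCycle x z') (fun hc => h2' (Or.inl hc.symm))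
    · by_cases h2 : α.SameCycle z x ∨ α.SameCycle z y
      · simp [hg, h1, h1', h2] at h
      · simp only [hg, h1, h1', h2, if_false, if_true] at h
        have := Quotient.exact (Sum.inl.inj h)
        exact absurd (this : α.SameCycle z x) (fun hc => h2 (Or.inl hc))
    · by_cases h2 : α.SameCycle z x ∨ α.SameCycle z y
        <;> by_cases h2' : α.SameCycle z' x ∨ α.SameCycle z' y
      · -- both dirty : both ~β y
        have hzy : β.SameCycle z y := by
          rcases dirty_reach α h2 with h | h
          · exact absurd h h1
          · exact h
        have hz'y : β.SameCycle z' y := by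
          rcases dirty_reach α h2' with h | h
          · exact absurd h h1'
          · exact h
        exact hzy.trans hz'y.symm
      · simp [hg, h1, h1', h2, h2'] at h
      · simp [hg, h1, h1', h2, h2'] at h
      · simp only [hg, h1, h1', h2, h2', if_false] at h
        rw [not_or] at h2
        exact (sameCycle_swap_iff α h2.1 h2.2).1 (Quotient.exact (Sum.inl.inj h))
  calc permCyc β ≤ Nat.card ((Quotient (permSetoid α)) ⊕ Unit) :=
        Nat.card_le_card_of_injective _ hinj
    _ = permCyc α + 1 := by rw [Nat.card_sum]; simp [permCyc]

lemma permCyc_mul_swap_add_one_le (α : Equiv.Perm A) {x y : A} (hxy : x ≠ y)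
    (hns : ¬ α.SameCycle x y) :
    permCyc (α * Equiv.swap x y) + 1 ≤ permCyc α := by
  set β := α * Equiv.swap x y with hβ
  have hconn : β.SameCycle x y := swap_connects α hns
  set g : A → Quotient (permSetoid α) := fun z =>
    if α.SameCycle z x ∨ α.SameCycle z y then Quotient.mk (permSetoid α) x
    else Quotient.mk (permSetoid α) z with hg
  have hdirtyx : ∀ z : A, (α.SameCycle z x ∨ α.SameCycle z y) → β.SameCycle z x := by
    intro z h
    rcases dirty_reach α h with h' | h'
    · exact h'
    · exact h'.trans hconn.symm
  have key : ∀ z z' : A, β.SameCycle z z' → g z = g z' := by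
    intro z z' hzz
    by_cases h2 : α.SameCycle z x ∨ α.SameCycle z y
      <;> by_cases h2' : α.SameCycle z' x ∨ α.SameCycle z' y
    · simp [hg, h2, h2']
    · exfalso
      push_neg at h2'
      exact h2'.1 ((sameCycle_swap_iff α h2'.1 h2'.2).2 (hzz.symm.trans (hdirtyx z h2)))
    · exfalso
      push_neg at h2
      exact h2.1 ((sameCycle_swap_iff α h2.1 h2.2).2 (hzz.trans (hdirtyx z' h2')))
    · push_neg at h2
      simp only [hg, if_neg (by tauto : ¬ (α.SameCycle z x ∨ α.SameCycle z y)), if_neg h2']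
      exact Quotient.sound ((sameCycle_swap_iff α h2.1 h2.2).2 hzz)
  set G : (Quotient (permSetoid β)) ⊕ Unit → Quotient (permSetoid α) :=
    Sum.elim (Quotient.lift g key) (fun _ => Quotient.mk (permSetoid α) y) with hG
  have hGy : ∀ z : A, g z ≠ Quotient.mk (permSetoid α) y := by
    intro z h
    by_cases h2 : α.SameCycle z x ∨ α.SameCycle z y
    · simp only [hg, h2, if_true] at h
      exact hns (Quotient.exact h)
    · simp only [hg, h2, if_false] at h
      exact h2 (Or.inr (Quotient.exact h))
  have hinj : Function.Injective G := by
    rintro (q | u) (q' | u') h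
    · obtain ⟨z, rfl⟩ := Quotient.exists_rep q
      obtain ⟨z', rfl⟩ := Quotient.exists_rep q'
      have hzz : g z = g z' := h
      refine congrArg Sum.inl (Quotient.sound ?_)
      show β.SameCycle z z'
      by_cases h2 : α.SameCycle z x ∨ α.SameCycle z y
        <;> by_cases h2' : α.SameCycle z' x ∨ α.SameCycle z' y
      · exact (hdirtyx z h2).trans (hdirtyx z' h2').symm
      · exfalso
        simp only [hg, h2, h2', if_true, if_false] at hzz
        exact h2' (Or.inl (Quotient.exact hzz).symm)
      · exfalso
        simp only [hg, h2, h2', if_true, if_false] at hzz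
        exact h2 (Or.inl (Quotient.exact hzz))
      · rw [not_or] at h2
        simp only [hg, if_neg (by tauto : ¬ (α.SameCycle z x ∨ α.SameCycle z y)),
          if_neg h2'] at hzz
        exact (sameCycle_swap_iff α h2.1 h2.2).1 (Quotient.exact hzz)
    · exfalso
      obtain ⟨z, rfl⟩ := Quotient.exists_rep q
      exact hGy z h
    · exfalso
      obtain ⟨z, rfl⟩ := Quotient.exists_rep q'
      exact hGy z h.symm
    · rfl
  calc permCyc β + 1 = Nat.card ((Quotient (permSetoid β)) ⊕ Unit) := by
        rw [Nat.card_sum]; simp [permCyc]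
    _ ≤ permCyc α := Nat.card_le_card_of_injective _ hinj

/-- the relation whose equivalence closure gives the "map components" -/
def pairRel (σ θ : Equiv.Perm A) : A → A → Prop := fun z w => σ z = w ∨ θ z = w

noncomputable def orbCount (σ θ : Equiv.Perm A) : ℕ :=
  Nat.card (Quotient (Relation.EqvGen.setoid (pairRel σ θ)))

lemma eqvGen_collapse {r s : A → A → Prop} (hs : Equivalence s)
    (h : ∀ a b, r a b → s a b) : ∀ {a b}, Relation.EqvGen r a b → s a b := by
  intro a b hab
  induction hab with
  | rel x y hxy => exact h _ _ hxy
  | refl x => exact hs.refl x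
  | symm x y _ ih => exact hs.symm ih
  | trans x y z _ _ ih1 ih2 => exact hs.trans ih1 ih2

lemma eqvGen_step (σ θ : Equiv.Perm A) (u : A) :
    Relation.EqvGen (pairRel σ θ) u ((σ * θ) u) :=
  Relation.EqvGen.trans _ _ _
    (Relation.EqvGen.rel _ _ (Or.inr rfl))
    (Relation.EqvGen.rel _ _ (Or.inl (by rw [Equiv.Perm.mul_apply])))

lemma sameCycle_to_eqvGen (σ θ : Equiv.Perm A) {z w : A}
    (h : (σ * θ).SameCycle z w) : Relation.EqvGen (pairRel σ θ) z w := by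
  obtain ⟨n, hn⟩ := sameCycle_exists_nat h
  clear h
  subst hn
  induction n with
  | zero => simpa using Relation.EqvGen.refl z
  | succ m ih =>
    rw [pow_succ', Equiv.Perm.mul_apply]
    exact Relation.EqvGen.trans _ _ _ ih (eqvGen_step σ θ _)

/-- The genus inequality for "hypermaps" (Jacques): for an involution `θ` and any `σ`,
`2 c(σ) + 2 c(σθ) ≤ |supp θ| + 4 t` where `t` is the number of `⟨σ,θ⟩`-orbit classes. -/
theorem jacques_aux : ∀ n : ℕ, ∀ θ σ : Equiv.Perm A, θ * θ = 1 → θ.support.card = n →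
    2 * permCyc σ + 2 * permCyc (σ * θ) ≤ θ.support.card + 4 * orbCount σ θ := by
  intro n
  induction n using Nat.strong_induction_on with
  | _ n ih =>
    intro θ σ hinv hcard
    by_cases hθ1 : θ = 1
    · -- base case
      subst hθ1
      rw [mul_one]
      have hset : Relation.EqvGen.setoid (pairRel σ 1) = permSetoid σ := by
        apply Setoid.ext
        intro a b
        constructor
        · intro h
          exact eqvGen_collapse (Equiv.Perm.SameCycle.equivalence (f := σ))
            (fun u w huw => by
              rcases huw with h' | h'
              · exact sameCycle_of_pow (n := 1) (by simpa using h')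
              · simp only [Equiv.Perm.one_apply] at h'
                exact h' ▸ Equiv.Perm.SameCycle.refl _ _) h
        · intro h
          have := sameCycle_to_eqvGen σ 1 (z := a) (w := b) (by rwa [mul_one])
          exact this
      have : orbCount σ 1 = permCyc σ := by
        unfold orbCount permCyc
        rw [hset]
      rw [this]
      omega
    · -- θ has a moved point x
      have hsup : θ.support ≠ ∅ := fun h => hθ1 (Equiv.Perm.support_eq_empty_iff.1 h)
      obtain ⟨x, hx⟩ := Finset.nonempty_iff_ne_empty.2 hsup
      have hx' : θ x ≠ x := Equiv.Perm.mem_support.1 hx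
      set y := θ x with hy
      have hθθ : ∀ z, θ (θ z) = z := by
        intro z
        have : (θ * θ) z = (1 : Equiv.Perm A) z := by rw [hinv]
        simpa using this
      have hxy : x ≠ y := fun h => hx' (hy ▸ h.symm)
      have hyx : θ y = x := by rw [hy, hθθ]
      set θ' := θ * Equiv.swap x y with hθ'
      have hθ'app : ∀ z, z ≠ x → z ≠ y → θ' z = θ z := by
        intro z h1 h2
        rw [hθ', Equiv.Perm.mul_apply, Equiv.swap_apply_of_ne_of_ne h1 h2]
      have hθ'x : θ' x = x := by
        rw [hθ', Equiv.Perm.mul_apply, Equiv.swap_apply_left, hyx]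
      have hθ'y : θ' y = y := by
        rw [hθ', Equiv.Perm.mul_apply, Equiv.swap_apply_right, ← hy]
      have hθ'inv : θ' * θ' = 1 := by
        apply Equiv.ext
        intro z
        simp only [Equiv.Perm.mul_apply, Equiv.Perm.one_apply]
        by_cases h1 : z = x
        · rw [h1, hθ'x, hθ'x]
        by_cases h2 : z = y
        · rw [h2, hθ'y, hθ'y]
        · rw [hθ'app z h1 h2]
          have h3 : θ z ≠ x := fun h => h2 (by rw [← hθθ z, h, ← hy])
          have h4 : θ z ≠ y := fun h => h1 (by rw [← hθθ z, h, hyx])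
          rw [hθ'app _ h3 h4, hθθ]
      have hsupp' : θ'.support = θ.support \ {x, y} := by
        ext z
        simp only [Equiv.Perm.mem_support, Finset.mem_sdiff, Finset.mem_insert,
          Finset.mem_singleton]
        by_cases h1 : z = x
        · subst h1; simp [hθ'x]
        by_cases h2 : z = y
        · subst h2; simp [hθ'y]
        · rw [hθ'app z h1 h2]
          tauto
      have hxysub : {x, y} ⊆ θ.support := by
        intro z hz
        simp only [Finset.mem_insert, Finset.mem_singleton] at hz
        rcases hz with rfl | rfl
        · exact hx
        · exact Equiv.Perm.mem_support.2 (by rw [hyx]; exact hxy)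
      have hcard2 : θ.support.card = θ'.support.card + 2 := by
        rw [hsupp', Finset.card_sdiff_of_subset hxysub]
        have h2 : ({x, y} : Finset A).card = 2 := by
          rw [Finset.card_insert_of_notMem (by simpa using hxy), Finset.card_singleton]
        have hle : ({x, y} : Finset A).card ≤ θ.support.card := Finset.card_le_card hxysub
        omega
      have hIH := ih (θ'.support.card) (by omega) θ' σ hθ'inv rfl
      have hθeq : θ = θ' * Equiv.swap x y := by
        rw [hθ', mul_assoc, Equiv.swap_mul_self, mul_one]
      have hσθ : σ * θ = (σ * θ') * Equiv.swap x y := by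
        rw [hθeq, ← mul_assoc]
      by_cases hcase : Relation.EqvGen (pairRel σ θ') x y
      · -- Case A : the two ends already connected; setoids equal
        have hseteq : Relation.EqvGen.setoid (pairRel σ θ) =
            Relation.EqvGen.setoid (pairRel σ θ') := by
          apply Setoid.ext
          intro a b
          constructor
          · intro h
            refine eqvGen_collapse (Relation.EqvGen.is_equivalence (r := pairRel σ θ'))
              (fun u w huw => ?_) h
            rcases huw with h' | h'
            · exact Relation.EqvGen.rel _ _ (Or.inl h')
            · by_cases h1 : u = x
              · subst h1; rw [← hy] at h'; exact h' ▸ hcase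
              by_cases h2 : u = y
              · subst h2; rw [hyx] at h'
                exact h' ▸ Relation.EqvGen.symm _ _ hcase
              · exact Relation.EqvGen.rel _ _ (Or.inr (by rw [hθ'app u h1 h2]; exact h'))
          · intro h
            refine eqvGen_collapse (Relation.EqvGen.is_equivalence (r := pairRel σ θ))
              (fun u w huw => ?_) h
            rcases huw with h' | h'
            · exact Relation.EqvGen.rel _ _ (Or.inl h')
            · by_cases h1 : u = x
              · subst h1; rw [hθ'x] at h'; exact h' ▸ Relation.EqvGen.refl _
              by_cases h2 : u = y
              · subst h2; rw [hθ'y] at h'; exact h' ▸ Relation.EqvGen.refl _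
              · exact Relation.EqvGen.rel _ _ (Or.inr (by rw [← hθ'app u h1 h2]; exact h'))
        have horb : orbCount σ θ = orbCount σ θ' := by
          unfold orbCount; rw [hseteq]
        have hL1 : permCyc (σ * θ) ≤ permCyc (σ * θ') + 1 := by
          rw [hσθ]; exact permCyc_mul_swap_le (σ * θ') hxy
        omega
      · -- Case B : the bridge genuinely merges
        have hnsc : ¬ (σ * θ').SameCycle x y := fun h =>
          hcase (sameCycle_to_eqvGen σ θ' h)
        have hL2 : permCyc (σ * θ) + 1 ≤ permCyc (σ * θ') := by
          rw [hσθ]; exact permCyc_mul_swap_add_one_le (σ * θ') hxy hnsc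
        -- t' ≤ t + 1
        have hdecomp : ∀ a b, Relation.EqvGen (pairRel σ θ) a b →
            (Relation.EqvGen (pairRel σ θ') a b ∨
             (Relation.EqvGen (pairRel σ θ') a x ∧ Relation.EqvGen (pairRel σ θ') y b) ∨
             (Relation.EqvGen (pairRel σ θ') a y ∧ Relation.EqvGen (pairRel σ θ') x b)) := by
          intro a b hab
          induction hab with
          | rel u w huw =>
            rcases huw with h' | h'
            · exact Or.inl (Relation.EqvGen.rel _ _ (Or.inl h'))
            · by_cases h1 : u = x
              · subst h1; rw [← hy] at h'
                exact Or.inr (Or.inl ⟨Relation.EqvGen.refl _, h' ▸ Relation.EqvGen.refl _⟩)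
              by_cases h2 : u = y
              · subst h2; rw [hyx] at h'
                exact Or.inr (Or.inr ⟨Relation.EqvGen.refl _, h' ▸ Relation.EqvGen.refl _⟩)
              · exact Or.inl (Relation.EqvGen.rel _ _ (Or.inr (by rw [hθ'app u h1 h2]; exact h')))
          | refl u => exact Or.inl (Relation.EqvGen.refl u)
          | symm u w _ ihuw =>
            rcases ihuw with h' | ⟨h1, h2⟩ | ⟨h1, h2⟩
            · exact Or.inl (Relation.EqvGen.symm _ _ h')
            · exact Or.inr (Or.inr ⟨Relation.EqvGen.symm _ _ h2, Relation.EqvGen.symm _ _ h1⟩)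
            · exact Or.inr (Or.inl ⟨Relation.EqvGen.symm _ _ h2, Relation.EqvGen.symm _ _ h1⟩)
          | trans u w v _ _ ihuw ihwv =>
            rcases ihuw with h' | ⟨h1, h2⟩ | ⟨h1, h2⟩ <;>
              rcases ihwv with h'' | ⟨h3, h4⟩ | ⟨h3, h4⟩
            · exact Or.inl (Relation.EqvGen.trans _ _ _ h' h'')
            · exact Or.inr (Or.inl ⟨Relation.EqvGen.trans _ _ _ h' h3, h4⟩)
            · exact Or.inr (Or.inr ⟨Relation.EqvGen.trans _ _ _ h' h3, h4⟩)
            · exact Or.inr (Or.inl ⟨h1, Relation.EqvGen.trans _ _ _ h2 h''⟩)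
            · exact absurd (Relation.EqvGen.symm _ _ (Relation.EqvGen.trans _ _ _ h2 h3)) hcase
            · exact Or.inl (Relation.EqvGen.trans _ _ _ h1 h4)
            · exact Or.inr (Or.inr ⟨h1, Relation.EqvGen.trans _ _ _ h2 h''⟩)
            · exact Or.inl (Relation.EqvGen.trans _ _ _ h1 h4)
            · exact absurd (Relation.EqvGen.trans _ _ _ h2 h3) hcase
        have ht : orbCount σ θ' ≤ orbCount σ θ + 1 := by
          set s := Relation.EqvGen.setoid (pairRel σ θ) with hs
          set s' := Relation.EqvGen.setoid (pairRel σ θ') with hs'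
          set g : A → (Quotient s) ⊕ Unit := fun z =>
            if Relation.EqvGen (pairRel σ θ') z y then Sum.inr ()
            else Sum.inl (Quotient.mk s z) with hgdef
          have key : ∀ z z' : A, Relation.EqvGen (pairRel σ θ') z z' → g z = g z' := by
            intro z z' hzz
            by_cases h1 : Relation.EqvGen (pairRel σ θ') z y
            · have h1' : Relation.EqvGen (pairRel σ θ') z' y :=
                Relation.EqvGen.trans _ _ _ (Relation.EqvGen.symm _ _ hzz) h1
              simp [hgdef, h1, h1']
            · have h1' : ¬ Relation.EqvGen (pairRel σ θ') z' y := fun h =>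
                h1 (Relation.EqvGen.trans _ _ _ hzz h)
              simp only [hgdef, h1, h1', if_false]
              refine congrArg Sum.inl (Quotient.sound ?_)
              show Relation.EqvGen (pairRel σ θ) z z'
              refine eqvGen_collapse (Relation.EqvGen.is_equivalence (r := pairRel σ θ))
                (fun u w huw => ?_) hzz
              rcases huw with h' | h'
              · exact Relation.EqvGen.rel _ _ (Or.inl h')
              · by_cases hu1 : u = x
                · subst hu1; rw [hθ'x] at h'; exact h' ▸ Relation.EqvGen.refl _
                by_cases hu2 : u = y
                · subst hu2; rw [hθ'y] at h'; exact h' ▸ Relation.EqvGen.refl _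
                · exact Relation.EqvGen.rel _ _ (Or.inr (by rw [← hθ'app u hu1 hu2]; exact h'))
          have hinj : Function.Injective (Quotient.lift g key :
              Quotient s' → (Quotient s) ⊕ Unit) := by
            intro q q'
            obtain ⟨z, rfl⟩ := Quotient.exists_rep q
            obtain ⟨z', rfl⟩ := Quotient.exists_rep q'
            intro hq
            have h : g z = g z' := hq
            apply Quotient.sound
            show Relation.EqvGen (pairRel σ θ') z z'
            by_cases h1 : Relation.EqvGen (pairRel σ θ') z y
              <;> by_cases h1' : Relation.EqvGen (pairRel σ θ') z' y
            · exact Relation.EqvGen.trans _ _ _ h1 (Relation.EqvGen.symm _ _ h1')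
            · simp [hgdef, h1, h1'] at h
            · simp [hgdef, h1, h1'] at h
            · simp only [hgdef, h1, h1', if_false] at h
              have hzz : Relation.EqvGen (pairRel σ θ) z z' :=
                Quotient.exact (Sum.inl.inj h)
              rcases hdecomp z z' hzz with h' | ⟨ha, hb⟩ | ⟨ha, hb⟩
              · exact h'
              · exact absurd (Relation.EqvGen.symm _ _ hb) h1'
              · exact absurd ha h1
          calc orbCount σ θ' ≤ Nat.card ((Quotient s) ⊕ Unit) :=
                Nat.card_le_card_of_injective _ hinj
            _ = orbCount σ θ + 1 := by rw [Nat.card_sum]; simp [orbCount, hs]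
        omega

theorem jacques (θ σ : Equiv.Perm A) (hinv : θ * θ = 1) :
    2 * permCyc σ + 2 * permCyc (σ * θ) ≤ θ.support.card + 4 * orbCount σ θ :=
  jacques_aux _ θ σ hinv rfl


end JacquesLemma

namespace PlanarGraph

variable (G : PlanarGraph)

noncomputable def revPerm : Equiv.Perm G.A :=
  Function.Involutive.toPerm G.rev (fun a => G.rev_rev a)

@[simp] lemma revPerm_apply (a : G.A) : G.revPerm a = G.rev a := rfl

lemma revPerm_invol : G.revPerm * G.revPerm = 1 := by
  apply Equiv.ext
  intro a
  simp [Equiv.Perm.mul_apply, G.rev_rev]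

lemma revPerm_support : (G.revPerm).support = Finset.univ := by
  ext a
  simp only [Equiv.Perm.mem_support, Finset.mem_univ, iff_true]
  exact fun h => G.rev_ne a h

lemma tail_pow_rot (n : ℕ) (a : G.A) : G.tail ((G.rot ^ n) a) = G.tail a := by
  induction n with
  | zero => simp
  | succ m ih => rw [pow_succ', Equiv.Perm.mul_apply, G.tail_rot, ih]

lemma left_pow_face (n : ℕ) (a : G.A) :
    G.left (((G.rot * G.revPerm) ^ n) a) = G.left a := by
  induction n with
  | zero => simp
  | succ m ih =>
    rw [pow_succ', Equiv.Perm.mul_apply, Equiv.Perm.mul_apply, revPerm_apply,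
      G.left_faceNext, ih]

lemma facePerm_iterate (n : ℕ) (a : G.A) :
    ((G.rot * G.revPerm) ^ n) a = (fun x => G.rot (G.rev x))^[n] a := by
  induction n with
  | zero => simp
  | succ m ih =>
    rw [Function.iterate_succ_apply', ← ih, pow_succ', Equiv.Perm.mul_apply,
      Equiv.Perm.mul_apply, revPerm_apply]

lemma tail_surjective (hA : Nonempty G.A) : Function.Surjective G.tail := by
  obtain ⟨g0⟩ := hA
  intro u
  rcases (G.connected u (G.tail g0)).cases_head with heq | ⟨c, ⟨a, ha, _⟩, _⟩
  · exact ⟨g0, heq.symm⟩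
  · exact ⟨a, ha⟩

/-- With Euler's formula and dual connectivity, the darts at each vertex
form a single orbit of the rotation. -/
theorem single_orbit
    (htrans : ∀ g g' : G.A, Relation.EqvGen (pairRel G.rot G.revPerm) g g')
    {g g' : G.A} (h : G.tail g = G.tail g') : G.rot.SameCycle g g' := by
  by_contra hns
  have hA : Nonempty G.A := ⟨g⟩
  -- the quotient by rot-cycles maps onto V
  have keyT : ∀ a b : G.A, G.rot.SameCycle a b → G.tail a = G.tail b := by
    intro a b hab
    obtain ⟨n, hn⟩ := sameCycle_exists_nat hab
    rw [← hn, tail_pow_rot]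
  set fT : Quotient (permSetoid G.rot) → G.V := Quotient.lift G.tail keyT with hfT
  have hsurj : Function.Surjective fT := by
    intro u
    obtain ⟨a, ha⟩ := G.tail_surjective hA u
    exact ⟨Quotient.mk _ a, ha⟩
  have hninj : ¬ Function.Injective fT := by
    intro hinj
    exact hns (Quotient.exact (hinj (h :
      fT (Quotient.mk (permSetoid G.rot) g) = fT (Quotient.mk (permSetoid G.rot) g'))))
  have hVlt : Fintype.card G.V < permCyc G.rot := by
    letI : Fintype (Quotient (permSetoid G.rot)) := Fintype.ofFinite _
    have hle : Fintype.card G.V ≤ Fintype.card (Quotient (permSetoid G.rot)) :=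
      Fintype.card_le_of_surjective fT hsurj
    rcases lt_or_eq_of_le hle with hlt | heqc
    · rw [permCyc, Nat.card_eq_fintype_card]; exact hlt
    · exfalso
      exact hninj ((Fintype.bijective_iff_surjective_and_card fT).2 ⟨hsurj, heqc.symm⟩).1
  -- the quotient by face-cycles is F
  have keyF : ∀ a b : G.A, (G.rot * G.revPerm).SameCycle a b → G.left a = G.left b := by
    intro a b hab
    obtain ⟨n, hn⟩ := sameCycle_exists_nat hab
    rw [← hn, left_pow_face]
  have hFbij : Function.Bijective
      (Quotient.lift G.left keyF : Quotient (permSetoid (G.rot * G.revPerm)) → G.F) := by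
    constructor
    · intro q q'
      obtain ⟨a, rfl⟩ := Quotient.exists_rep q
      obtain ⟨b, rfl⟩ := Quotient.exists_rep q'
      intro hq
      have hl : G.left a = G.left b := hq
      obtain ⟨n, hn⟩ := G.face_orbit a b hl
      exact Quotient.sound (sameCycle_of_pow (n := n) (by rw [facePerm_iterate]; exact hn))
    · intro f
      obtain ⟨a, ha⟩ := G.left_surjective f
      exact ⟨Quotient.mk _ a, ha⟩
  have hFcard : permCyc (G.rot * G.revPerm) = Fintype.card G.F := by
    rw [permCyc, Nat.card_eq_of_bijective _ hFbij, Nat.card_eq_fintype_card]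
  -- one single map component
  have horb : orbCount G.rot G.revPerm = 1 := by
    rw [orbCount, Nat.card_eq_one_iff_unique]
    constructor
    · constructor
      intro q q'
      obtain ⟨a, rfl⟩ := Quotient.exists_rep q
      obtain ⟨b, rfl⟩ := Quotient.exists_rep q'
      exact Quotient.sound (htrans a b)
    · exact ⟨Quotient.mk _ g⟩
  have hj := jacques G.revPerm G.rot (G.revPerm_invol)
  rw [horb, hFcard, revPerm_support, Finset.card_univ] at hj
  have heuler := G.euler
  omega

end PlanarGraph


namespace PlanarGraph

section WalkLemmas

variable {G : PlanarGraph}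

lemma isWalk_nil_iff {u w : G.V} : G.IsWalk [] u w ↔ u = w := Iff.rfl

lemma isWalk_cons_iff {a : G.A} {p : List G.A} {u w : G.V} :
    G.IsWalk (a :: p) u w ↔ G.tail a = u ∧ G.IsWalk p (G.head a) w := Iff.rfl

lemma isWalk_append {p q : List G.A} {u w z : G.V}
    (hp : G.IsWalk p u w) (hq : G.IsWalk q w z) : G.IsWalk (p ++ q) u z := by
  induction p generalizing u with
  | nil => rw [List.nil_append]; exact (isWalk_nil_iff.1 hp) ▸ hq
  | cons a p ih => exact ⟨hp.1, ih hp.2⟩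

lemma isWalk_single {a : G.A} : G.IsWalk [a] (G.tail a) (G.head a) := ⟨rfl, rfl⟩

lemma isWalk_split {p₁ p₂ : List G.A} {g : G.A} {u w : G.V}
    (h : G.IsWalk (p₁ ++ g :: p₂) u w) :
    G.IsWalk p₁ u (G.tail g) ∧ G.IsWalk p₂ (G.head g) w := by
  induction p₁ generalizing u with
  | nil =>
    rw [List.nil_append] at h
    exact ⟨h.1.symm, h.2⟩
  | cons a p ih =>
    obtain ⟨h1, h2⟩ := h
    obtain ⟨h3, h4⟩ := ih h2
    exact ⟨⟨h1, h3⟩, h4⟩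

lemma walkLen_nil (len : G.A → ℝ) : G.walkLen len [] = 0 := by simp [walkLen]

lemma walkLen_cons (len : G.A → ℝ) (a : G.A) (p : List G.A) :
    G.walkLen len (a :: p) = len a + G.walkLen len p := by simp [walkLen]

lemma walkLen_append (len : G.A → ℝ) (p q : List G.A) :
    G.walkLen len (p ++ q) = G.walkLen len p + G.walkLen len q := by
  simp [walkLen]

end WalkLemmas

section SPLemmas

variable {G : PlanarGraph} {len : G.A → ℝ} {d : G.V → G.V → ℝ}

lemma d_self (hd : G.IsSPDist len d) (hneg : G.NoNegCycle len) (u : G.V) : d u u = 0 := by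
  obtain ⟨⟨p, hp, hplen⟩, hmin⟩ := hd u u
  have h1 : d u u ≤ 0 := by
    have := hmin [] (isWalk_nil_iff.2 rfl)
    rwa [walkLen_nil] at this
  have h2 : 0 ≤ d u u := hplen ▸ hneg u p hp
  linarith

lemma d_triangle (hd : G.IsSPDist len d) (u z w : G.V) : d u w ≤ d u z + d z w := by
  obtain ⟨⟨p, hp, hplen⟩, _⟩ := hd u z
  obtain ⟨⟨q, hq, hqlen⟩, _⟩ := hd z w
  have := (hd u w).2 (p ++ q) (isWalk_append hp hq)
  rwa [walkLen_append, hplen, hqlen] at this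

/-- the unique shortest walk from `u` to `w` -/
noncomputable def spWalk (hd : G.IsSPDist len d) (u w : G.V) : List G.A :=
  (hd u w).1.choose

lemma spWalk_isWalk (hd : G.IsSPDist len d) (u w : G.V) :
    G.IsWalk (spWalk hd u w) u w := (hd u w).1.choose_spec.1

lemma spWalk_len (hd : G.IsSPDist len d) (u w : G.V) :
    G.walkLen len (spWalk hd u w) = d u w := (hd u w).1.choose_spec.2

lemma walk_eq_spWalk (hd : G.IsSPDist len d) (hup : G.UniqueShortestPaths len d)
    {p : List G.A} {u w : G.V} (hp : G.IsWalk p u w) (hplen : G.walkLen len p = d u w) :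
    p = spWalk hd u w :=
  hup u w p (spWalk hd u w) hp (spWalk_isWalk hd u w) hplen (spWalk_len hd u w)

/-- walking along a tree arc extends the shortest walk -/
lemma spWalk_tree_step (hd : G.IsSPDist len d) (hup : G.UniqueShortestPaths len d)
    {v : G.V} {T : Set G.A} (hT : G.IsSPTree len d v T) {a : G.A} (ha : a ∈ T) :
    spWalk hd v (G.head a) = spWalk hd v (G.tail a) ++ [a] := by
  symm
  apply walk_eq_spWalk hd hup
  · exact isWalk_append (spWalk_isWalk hd v (G.tail a)) isWalk_single
  · rw [walkLen_append, spWalk_len, walkLen_cons, walkLen_nil, hT.1 a ha]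
    ring

/-- a tree arc does not appear on the shortest walk to its own tail -/
lemma notMem_spWalk_tail (hd : G.IsSPDist len d) (hneg : G.NoNegCycle len)
    (hup : G.UniqueShortestPaths len d)
    {v : G.V} {T : Set G.A} (hT : G.IsSPTree len d v T) {g : G.A} (hg : g ∈ T) :
    g ∉ spWalk hd v (G.tail g) := by
  intro hmem
  obtain ⟨p₁, p₂, hsplit⟩ := List.append_of_mem hmem
  have hw := spWalk_isWalk hd v (G.tail g)
  have hl := spWalk_len hd v (G.tail g)
  rw [hsplit] at hw hl
  obtain ⟨hw1, hw2⟩ := isWalk_split hw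
  rw [walkLen_append, walkLen_cons] at hl
  have hd1 : d v (G.tail g) ≤ G.walkLen len p₁ := (hd v (G.tail g)).2 p₁ hw1
  have hd2 : d (G.head g) (G.tail g) ≤ G.walkLen len p₂ := (hd (G.head g) (G.tail g)).2 p₂ hw2
  have htree : d v (G.head g) = d v (G.tail g) + len g := hT.1 g hg
  -- length bound gives : len g + d(head g)(tail g) ≤ 0
  have hneg1 : len g + d (G.head g) (G.tail g) ≤ 0 := by linarith
  have htri : d v (G.tail g) ≤ d v (G.head g) + d (G.head g) (G.tail g) :=
    d_triangle hd v (G.head g) (G.tail g)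
  have heq : d v (G.tail g) = d v (G.head g) + d (G.head g) (G.tail g) := by linarith
  -- build an alternative shortest walk through head g
  have hwalk2 : G.IsWalk (spWalk hd v (G.head g) ++ spWalk hd (G.head g) (G.tail g))
      v (G.tail g) :=
    isWalk_append (spWalk_isWalk hd v (G.head g)) (spWalk_isWalk hd (G.head g) (G.tail g))
  have hlen2 : G.walkLen len (spWalk hd v (G.head g) ++ spWalk hd (G.head g) (G.tail g))
      = d v (G.tail g) := by
    rw [walkLen_append, spWalk_len, spWalk_len, heq]
  have hcontr := walk_eq_spWalk hd hup hwalk2 hlen2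
  rw [spWalk_tree_step hd hup hT hg] at hcontr
  -- spWalk v (tail g) ++ [g] ++ (...) = spWalk v (tail g) : length contradiction
  have : (spWalk hd v (G.tail g) ++ [g] ++ spWalk hd (G.head g) (G.tail g)).length
      = (spWalk hd v (G.tail g)).length := by rw [hcontr]
  simp at this

/-- a vertex `u` lying on a shortest walk from `v` to a vertex of `Vor` is itself in `Vor` -/
lemma mid_in_Vor (hd : G.IsSPDist len d)
    {S : Set G.V} {ω : G.V → ℝ} {v : G.V} (hv : v ∈ S)
    (hpart : ∀ w : G.V, ∃ s ∈ S, w ∈ G.VorCell d S ω s)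
    {Vor : Set G.V} (hVor : Vor = G.VorCell d S ω v)
    {w u : G.V} (hw : w ∈ Vor) {p₁ p₂ : List G.A}
    (hp₁ : G.IsWalk p₁ v u) (hp₂ : G.IsWalk p₂ u w)
    (hlen : G.walkLen len p₁ + G.walkLen len p₂ = d v w) : u ∈ Vor := by
  have hd1 : d v u ≤ G.walkLen len p₁ := (hd v u).2 p₁ hp₁
  have hd2 : d u w ≤ G.walkLen len p₂ := (hd u w).2 p₂ hp₂
  have htri : d v w ≤ d v u + d u w := d_triangle hd v u w
  have heq : d v w = d v u + d u w := by linarith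
  obtain ⟨s, hsS, hscell⟩ := hpart u
  by_cases hsv : s = v
  · subst hsv; rwa [hVor]
  · exfalso
    obtain ⟨_, hsu⟩ := hscell
    have h1 : ω s + d s u < ω v + d v u := hsu v hv (fun h => hsv h.symm)
    rw [hVor] at hw
    obtain ⟨_, hwv⟩ := hw
    have h2 : ω v + d v w < ω s + d s w := hwv s hsS hsv
    have h3 : d s w ≤ d s u + d u w := d_triangle hd s u w
    linarith

/-- endpoints of arcs on shortest walks to `Vor` are in `Vor` -/
lemma ends_in_Vor (hd : G.IsSPDist len d)
    {S : Set G.V} {ω : G.V → ℝ} {v : G.V} (hv : v ∈ S)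
    (hpart : ∀ w : G.V, ∃ s ∈ S, w ∈ G.VorCell d S ω s)
    {Vor : Set G.V} (hVor : Vor = G.VorCell d S ω v)
    {w : G.V} (hw : w ∈ Vor) {g : G.A} (hg : g ∈ spWalk hd v w) :
    G.tail g ∈ Vor ∧ G.head g ∈ Vor := by
  obtain ⟨p₁, p₂, hsplit⟩ := List.append_of_mem hg
  have hwalk := spWalk_isWalk hd v w
  have hlen := spWalk_len hd v w
  rw [hsplit] at hwalk hlen
  obtain ⟨hw1, hw2⟩ := isWalk_split hwalk
  rw [walkLen_append, walkLen_cons] at hlen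
  constructor
  · refine mid_in_Vor hd hv hpart hVor hw hw1 (isWalk_append isWalk_single hw2) ?_
    rw [walkLen_append, walkLen_cons, walkLen_nil]
    linarith
  · refine mid_in_Vor hd hv hpart hVor hw
      (isWalk_append hw1 isWalk_single) hw2 ?_
    rw [walkLen_append, walkLen_cons, walkLen_nil]
    linarith

end SPLemmas

end PlanarGraph

namespace PlanarGraph

section DualWalkLemmas

variable {G : PlanarGraph}

lemma isDualWalk_nil_iff {s : Set G.A} {φ ψ : G.F} : G.IsDualWalk s [] φ ψ ↔ φ = ψ := Iff.rfl

lemma isDualWalk_append {s : Set G.A} {p q : List G.A} {φ ψ χ : G.F}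
    (hp : G.IsDualWalk s p φ ψ) (hq : G.IsDualWalk s q ψ χ) :
    G.IsDualWalk s (p ++ q) φ χ := by
  induction p generalizing φ with
  | nil => rw [List.nil_append]; exact (isDualWalk_nil_iff.1 hp) ▸ hq
  | cons a p ih => exact ⟨hp.1, hp.2.1, ih hp.2.2⟩

lemma isDualWalk_single {s : Set G.A} {b : G.A} (hb : b ∈ s) :
    G.IsDualWalk s [b] (G.dualTail b) (G.dualHead b) := ⟨hb, rfl, rfl⟩

lemma isDualWalk_split {s : Set G.A} {p₁ p₂ : List G.A} {g : G.A} {φ ψ : G.F}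
    (h : G.IsDualWalk s (p₁ ++ g :: p₂) φ ψ) :
    G.IsDualWalk s p₁ φ (G.dualTail g) ∧ g ∈ s ∧ G.IsDualWalk s p₂ (G.dualHead g) ψ := by
  induction p₁ generalizing φ with
  | nil =>
    rw [List.nil_append] at h
    exact ⟨h.2.1.symm, h.1, h.2.2⟩
  | cons a p ih =>
    obtain ⟨h1, h2, h3⟩ := h
    obtain ⟨h4, h5, h6⟩ := ih h3
    exact ⟨⟨h1, h2, h4⟩, h5, h6⟩

/-- walks in the cotree from the root are unique -/
lemma dualWalk_unique {T Tstar : Set G.A} {root : G.F}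
    (hTstar : G.IsCotree T Tstar root) :
    ∀ (p q : List G.A) (φ : G.F), G.IsDualWalk Tstar p root φ →
      G.IsDualWalk Tstar q root φ → p = q := by
  intro p
  induction p using List.reverseRecOn with
  | nil =>
    intro q φ hp hq
    have hφ : root = φ := isDualWalk_nil_iff.1 hp
    subst hφ
    rcases List.eq_nil_or_concat q with rfl | ⟨q', b, rfl⟩
    · rfl
    · rw [List.concat_eq_append] at hq
      obtain ⟨_, hb, hlast⟩ := isDualWalk_split hq
      exact absurd (isDualWalk_nil_iff.1 hlast) (hTstar.2.2.2.2.1 b hb)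
  | append_singleton p' b ih =>
    intro q φ hp hq
    obtain ⟨hp', hbT, hlast⟩ := isDualWalk_split hp
    have hbφ : G.dualHead b = φ := isDualWalk_nil_iff.1 hlast
    have hφroot : φ ≠ root := hbφ ▸ hTstar.2.2.2.2.1 b hbT
    rcases List.eq_nil_or_concat q with rfl | ⟨q', b', rfl⟩
    · exact absurd (isDualWalk_nil_iff.1 hq).symm hφroot
    · rw [List.concat_eq_append] at hq
      obtain ⟨hq', hb'T, hlast'⟩ := isDualWalk_split hq
      have hb'φ : G.dualHead b' = φ := isDualWalk_nil_iff.1 hlast'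
      obtain ⟨c, _, hcuniq⟩ := hTstar.2.2.2.1 φ hφroot
      have hbb' : b' = b := by
        rw [hcuniq b' ⟨hb'T, hb'φ⟩, hcuniq b ⟨hbT, hbφ⟩]
      rw [hbb'] at hq'
      rw [List.concat_eq_append, hbb', ih q' (G.dualTail b) hp' hq']

end DualWalkLemmas

section ParityLemmas

lemma even_card_of_involution {β : Type} [DecidableEq β] :
    ∀ (n : ℕ) (s : Finset β) (f : β → β), s.card = n → (∀ x ∈ s, f x ∈ s) →
    (∀ x, f (f x) = x) → (∀ x ∈ s, f x ≠ x) → Even s.card := by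
  intro n
  induction n using Nat.strong_induction_on with
  | _ n ihn =>
    intro s f hcard hmem hff hne
    rcases s.eq_empty_or_nonempty with rfl | ⟨x, hx⟩
    · simp
    · set s' := (s.erase x).erase (f x) with hs'
      have hfx : f x ∈ s := hmem x hx
      have hxx : f x ≠ x := hne x hx
      have hfxe : f x ∈ s.erase x := Finset.mem_erase.2 ⟨hxx, hfx⟩
      have hc1 : (s.erase x).card = s.card - 1 := Finset.card_erase_of_mem hx
      have hc2 : s'.card = (s.erase x).card - 1 := Finset.card_erase_of_mem hfxe
      have hpos : 0 < s.card := Finset.card_pos.2 ⟨x, hx⟩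
      have hpos2 : 0 < (s.erase x).card := Finset.card_pos.2 ⟨f x, hfxe⟩
      have hcards : s.card = s'.card + 2 := by omega
      have hmem' : ∀ y ∈ s', f y ∈ s' := by
        intro y hy
        rw [hs', Finset.mem_erase, Finset.mem_erase] at hy
        obtain ⟨hy1, hy2, hy3⟩ := hy
        rw [hs', Finset.mem_erase, Finset.mem_erase]
        refine ⟨?_, ?_, hmem y hy3⟩
        · intro h; exact hy2 (by rw [← hff y, h, hff])
        · intro h; exact hy1 (by rw [← hff y, h])
      have hne' : ∀ y ∈ s', f y ≠ y := fun y hy =>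
        hne y (Finset.mem_of_mem_erase (Finset.mem_of_mem_erase hy))
      have hlt : s'.card < n := by omega
      obtain ⟨k, hk⟩ := ihn s'.card hlt s' f rfl hmem' hff hne'
      exact ⟨k + 1, by omega⟩

/-- the number of sign changes of a predicate along the orbits of a permutation,
within an invariant set, is even -/
lemma even_signChanges {β : Type} [DecidableEq β] [Fintype β] (π : Equiv.Perm β)
    (W : Finset β) (hW : ∀ g ∈ W, π g ∈ W) (c : β → Prop) (S : Finset β)
    (hS : ∀ g, g ∈ S ↔ g ∈ W ∧ ¬ (c g ↔ c (π g))) : Even S.card := by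
  classical
  have hSeqS : S = W.filter (fun g => ¬ (c g ↔ c (π g))) := by
    ext g
    rw [hS g, Finset.mem_filter]
  rw [hSeqS]
  set P := W.filter (fun g => c g) with hP
  set Q := W.filter (fun g => c (π g)) with hQ
  have himg : W.image π = W := by
    apply Finset.eq_of_subset_of_card_le
    · intro z hz
      obtain ⟨gz, hgz, rfl⟩ := Finset.mem_image.1 hz
      exact hW gz hgz
    · rw [Finset.card_image_of_injective _ π.injective]
  have hQP : Q.card = P.card := by
    have himgQ : Q.image π = P := by
      ext z
      simp only [hP, hQ, Finset.mem_image, Finset.mem_filter]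
      constructor
      · rintro ⟨g, ⟨hgW, hc⟩, rfl⟩
        exact ⟨hW g hgW, hc⟩
      · rintro ⟨hzW, hcz⟩
        obtain ⟨g, hgW, hgz⟩ := Finset.mem_image.1 (himg ▸ hzW)
        exact ⟨g, ⟨hgW, hgz ▸ hcz⟩, hgz⟩
    rw [← himgQ, Finset.card_image_of_injective _ π.injective]
  have hsplit : W.filter (fun g => ¬ (c g ↔ c (π g))) = (P \ Q) ∪ (Q \ P) := by
    ext g
    simp only [Finset.mem_filter, Finset.mem_union, Finset.mem_sdiff, hP, hQ]
    tauto
  have hd : Disjoint (P \ Q) (Q \ P) := by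
    rw [Finset.disjoint_left]
    intro g h1 h2
    rw [Finset.mem_sdiff] at h1 h2
    exact h2.2 h1.1
  have h1 : (P \ Q).card + (P ∩ Q).card = P.card := Finset.card_sdiff_add_card_inter P Q
  have h2 : (Q \ P).card + (Q ∩ P).card = Q.card := Finset.card_sdiff_add_card_inter Q P
  have h3 : (P ∩ Q).card = (Q ∩ P).card := by rw [Finset.inter_comm]
  rw [hsplit, Finset.card_union_of_disjoint hd]
  exact ⟨(P \ Q).card, by omega⟩

end ParityLemmas

end PlanarGraph

open PlanarGraph in
/-- Let `h ≠ h∞` be a hole, and suppose there is a boundary cycle `C*` of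
`Vor*(v)` other than `C*₀` that either strictly encloses `h*` or passes through `h*`
(equivalently, some vertex of `h` lies in the complement component `K` cut off by `C*`).
Then the unique edge of the cotree `T*` that exits `Vor*(v)` at `C*` lies on the path from
`h∞*` to `h*` in `T*`. -/
theorem exiting_edge_on_cotree_path_to_hole
    (G : PlanarGraph) (len : G.A → ℝ) (d : G.V → G.V → ℝ)
    (hd : G.IsSPDist len d) (hneg : G.NoNegCycle len)
    (hup : G.UniqueShortestPaths len d) (hgen : G.GenericDistances d)
    (Holes : Set G.F) (S : Set G.V) (ω : G.V → ℝ)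
    (hS : ∀ s ∈ S, ∃ h ∈ Holes, G.Incident s h)
    (hpart : ∀ w : G.V, ∃ s ∈ S, w ∈ G.VorCell d S ω s)
    (v : G.V) (hv : v ∈ S)
    (hinf : G.F) (hinfH : hinf ∈ Holes) (hvinf : G.Incident v hinf)
    (Vor : Set G.V) (hVor : Vor = G.VorCell d S ω v)
    (T : Set G.A) (hT : G.IsSPTree len d v T)
    (Tstar : Set G.A) (hTstar : G.IsCotree T Tstar hinf)
    (C₀ : Set G.A) (hC₀ : C₀ ∈ G.boundaryCycles Vor)
    (hC₀inf : ∃ a ∈ C₀, G.DualIncident a hinf)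
    (hC₀uniq : ∀ C ∈ G.boundaryCycles Vor,
      (∃ a ∈ C, G.DualIncident a hinf) → C = C₀)
    (h : G.F) (hhH : h ∈ Holes) (hne : h ≠ hinf)
    (K : Set G.V) (hK : G.IsCompOfComplement Vor K)
    (C : Set G.A) (hC : C = G.boundaryCycle Vor K) (hCC0 : C ≠ C₀)
    (henc : ∃ w : G.V, G.Incident w h ∧ w ∈ K) :
    ∃ p : List G.A, G.IsDualWalk Tstar p hinf h ∧
      ∀ a : G.A, a ∈ Tstar → G.ExitsAt Vor C a → a ∈ p := by
  classical
  -- canonical cotree walks from the root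
  choose W hW using hTstar.2.2.2.2.2
  refine ⟨W h, hW h, ?_⟩
  intro a haT hexit
  obtain ⟨hFBtail, hFBhead, b, hbC, hbInc⟩ := hexit
  -- the set of faces strictly below `a` in the cotree
  set X : Set G.F := {φ | a ∈ W φ} with hXdef
  -- it suffices to prove `h ∈ X`
  suffices hfinal : h ∈ X by exact hfinal
  by_contra hh
  -- uniqueness of cotree walks
  have huniq := dualWalk_unique hTstar
  have hWmk : ∀ b' ∈ Tstar, W (G.dualHead b') = W (G.dualTail b') ++ [b'] := by
    intro b' hb'
    exact huniq _ _ _ (hW (G.dualHead b'))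
      (isDualWalk_append (hW (G.dualTail b')) (isDualWalk_single hb'))
  have hnotmem : ∀ b' ∈ Tstar, b' ∉ W (G.dualTail b') := by
    intro b' hb' hmem
    obtain ⟨p₁, p₂, hsplit⟩ := List.append_of_mem hmem
    have hw := hW (G.dualTail b')
    rw [hsplit] at hw
    obtain ⟨hw1, _, _⟩ := isDualWalk_split hw
    have hp₁ : p₁ = W (G.dualTail b') := huniq _ _ _ hw1 (hW _)
    have hlen := congrArg List.length hsplit
    rw [hp₁, List.length_append, List.length_cons] at hlen
    omega
  have hXhead : G.dualHead a ∈ X := by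
    show a ∈ W (G.dualHead a)
    rw [hWmk a haT]
    simp
  have hXtail : G.dualTail a ∉ X := hnotmem a haT
  have hXroot : hinf ∉ X := by
    have hWnil : W hinf = [] := huniq _ _ _ (hW hinf) (isDualWalk_nil_iff.2 rfl)
    show a ∉ W hinf
    rw [hWnil]
    simp
  -- the face to the left of `rot e` is the face to the right of `e`
  have hlrot : ∀ e : G.A, G.left (G.rot e) = G.right e := by
    intro e
    have h1 := G.left_faceNext (G.rev e)
    rw [G.rev_rev] at h1
    exact h1
  have hrev_tail : ∀ e : G.A, G.tail (G.rev e) = G.head e := G.tail_rev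
  have hrev_head : ∀ e : G.A, G.head (G.rev e) = G.tail e := by
    intro e
    have := G.tail_rev (G.rev e)
    rw [G.rev_rev] at this
    exact this.symm
  have hright_rev : ∀ e : G.A, G.right (G.rev e) = G.left e := by
    intro e
    show G.left (G.rev (G.rev e)) = G.left e
    rw [G.rev_rev]
  have hcross_rev : ∀ e : G.A,
      (¬ (G.left (G.rev e) ∈ X ↔ G.right (G.rev e) ∈ X)) ↔
      (¬ (G.left e ∈ X ↔ G.right e ∈ X)) := by
    intro e
    rw [hright_rev e]
    show (¬ (G.right e ∈ X ↔ G.left e ∈ X)) ↔ _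
    tauto
  -- crossing darts are tree darts or the exiting dart
  have hcrossT : ∀ e : G.A, ¬ (G.left e ∈ X ↔ G.right e ∈ X) →
      (e ∈ T ∨ G.rev e ∈ T ∨ e = a ∨ e = G.rev a) := by
    intro e hcr
    by_contra hcon
    push_neg at hcon
    obtain ⟨h1, h2, h3, h4⟩ := hcon
    have hiff : ∀ b' ∈ Tstar, b' ≠ a → (G.left b' ∈ X ↔ G.right b' ∈ X) := by
      intro b' hb' hba
      show a ∈ W (G.dualTail b') ↔ a ∈ W (G.dualHead b')
      rw [hWmk b' hb']
      simp only [List.mem_append, List.mem_singleton]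
      constructor
      · exact fun hm => Or.inl hm
      · rintro (hm | rfl)
        · exact hm
        · exact absurd rfl hba
    rcases hTstar.2.2.1 e h1 h2 with he | he
    · exact hcr (hiff e he h3)
    · have h4' : G.rev e ≠ a := fun hc => h4 (by rw [← hc, G.rev_rev])
      have := hiff (G.rev e) he h4'
      rw [hright_rev e] at this
      exact hcr (by tauto)
  -- endpoints of the exiting arc lie in Vor
  have hVtail : G.tail a ∈ Vor := hFBtail (G.tail a) ⟨a, rfl, rfl⟩
  have hVhead : G.head a ∈ Vor := by
    refine hFBtail (G.head a) ⟨G.rot (G.rev a), ?_, G.left_faceNext a⟩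
    rw [G.tail_rot, G.tail_rev]
  have hcross_a : ¬ (G.left a ∈ X ↔ G.right a ∈ X) := by
    intro hiff
    exact hXtail (hiff.2 hXhead)
  -- T-darts that cross lie on the shortest walks to the endpoints of `a`
  have hTcross : ∀ g ∈ T, ¬ (G.left g ∈ X ↔ G.right g ∈ X) →
      (g ∈ spWalk hd v (G.tail a) ∨ g ∈ spWalk hd v (G.head a)) := by
    intro g hgT hcrg
    by_contra hcon
    push_neg at hcon
    obtain ⟨hna, hnh⟩ := hcon
    set Wfin : Finset G.A := Finset.univ.filter
      (fun e => g ∈ spWalk hd v (G.tail e)) with hWfin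
    have hWrot : ∀ e ∈ Wfin, G.rot e ∈ Wfin := by
      intro e he
      rw [hWfin, Finset.mem_filter] at he ⊢
      rw [G.tail_rot]
      exact ⟨Finset.mem_univ _, he.2⟩
    set Sall : Finset G.A := Finset.univ.filter
      (fun e => g ∈ spWalk hd v (G.tail e) ∧ ¬ (G.left e ∈ X ↔ G.right e ∈ X)) with hSall
    have hpar : Even Sall.card := by
      refine even_signChanges G.rot Wfin hWrot (fun e => G.left e ∈ X) Sall ?_
      intro e
      rw [hWfin, hSall]
      simp only [Finset.mem_filter, Finset.mem_univ, true_and]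
      rw [hlrot e]
    set Sin : Finset G.A := Sall.filter (fun e => g ∈ spWalk hd v (G.head e)) with hSin
    set Sout : Finset G.A := Sall.filter (fun e => ¬ g ∈ spWalk hd v (G.head e)) with hSout
    have hsum : Sin.card + Sout.card = Sall.card :=
      Finset.card_filter_add_card_filter_not (fun e => g ∈ spWalk hd v (G.head e))
    have hSinEven : Even Sin.card := by
      refine even_card_of_involution Sin.card Sin G.rev rfl ?_ G.rev_rev ?_
      · intro e he
        rw [hSin, Finset.mem_filter, hSall, Finset.mem_filter] at he ⊢
        obtain ⟨⟨_, he1, he2⟩, he3⟩ := he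
        refine ⟨⟨Finset.mem_univ _, ?_, ?_⟩, ?_⟩
        · rw [hrev_tail]; exact he3
        · rw [hcross_rev]; exact he2
        · rw [hrev_head]; exact he1
      · intro e _
        exact G.rev_ne e
    have hSoutEven : Even Sout.card := by
      obtain ⟨k1, hk1⟩ := hpar
      obtain ⟨k2, hk2⟩ := hSinEven
      exact ⟨k1 - k2, by omega⟩
    -- Sout ⊆ {rev g, a, rev a}
    have hsub : Sout ⊆ {G.rev g, a, G.rev a} := by
      intro e he
      rw [hSout, Finset.mem_filter, hSall, Finset.mem_filter] at he
      obtain ⟨⟨_, he1, he2⟩, he3⟩ := he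
      rcases hcrossT e he2 with heT | hreT | rfl | rfl
      · exfalso
        by_cases heg : e = g
        · subst heg
          exact notMem_spWalk_tail hd hneg hup hT hgT he1
        · have hiter : g ∈ spWalk hd v (G.head e) ↔ g ∈ spWalk hd v (G.tail e) := by
            rw [spWalk_tree_step hd hup hT heT]
            simp only [List.mem_append, List.mem_singleton]
            constructor
            · rintro (hm | hge)
              · exact hm
              · exact absurd hge.symm heg
            · exact fun hm => Or.inl hm
          exact he3 (hiter.2 he1)
      · by_cases heg : G.rev e = g
        · have : e = G.rev g := by rw [← heg, G.rev_rev]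
          simp [this]
        · exfalso
          have hiter : g ∈ spWalk hd v (G.head (G.rev e)) ↔
              g ∈ spWalk hd v (G.tail (G.rev e)) := by
            rw [spWalk_tree_step hd hup hT hreT]
            simp only [List.mem_append, List.mem_singleton]
            constructor
            · rintro (hm | hge)
              · exact hm
              · exact absurd hge.symm heg
            · exact fun hm => Or.inl hm
          rw [hrev_head, hrev_tail] at hiter
          exact he3 (hiter.1 he1)
      · simp
      · simp
    have hrevg_mem : G.rev g ∈ Sout := by
      rw [hSout, Finset.mem_filter, hSall, Finset.mem_filter]
      refine ⟨⟨Finset.mem_univ _, ?_, ?_⟩, ?_⟩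
      · rw [hrev_tail]
        rw [spWalk_tree_step hd hup hT hgT]
        simp
      · rw [hcross_rev]
        exact hcrg
      · rw [hrev_head]
        exact notMem_spWalk_tail hd hneg hup hT hgT
    have hanotm : a ∉ Sout := by
      rw [hSout, Finset.mem_filter, hSall, Finset.mem_filter]
      rintro ⟨⟨_, ha1, _⟩, _⟩
      exact hna ha1
    have hranotm : G.rev a ∉ Sout := by
      rw [hSout, Finset.mem_filter, hSall, Finset.mem_filter]
      rintro ⟨⟨_, ha1, _⟩, _⟩
      rw [hrev_tail] at ha1
      exact hnh ha1
    have hSoutone : Sout = {G.rev g} := by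
      apply Finset.Subset.antisymm
      · intro e he
        have := hsub he
        simp only [Finset.mem_insert, Finset.mem_singleton] at this
        rcases this with rfl | rfl | rfl
        · exact Finset.mem_singleton_self _
        · exact absurd he hanotm
        · exact absurd he hranotm
      · intro e he
        rw [Finset.mem_singleton] at he
        exact he ▸ hrevg_mem
    rw [hSoutone, Finset.card_singleton] at hSoutEven
    exact (Nat.not_even_one) hSoutEven
  -- all crossing darts have both endpoints in Vor
  have hcross_ends : ∀ e : G.A, ¬ (G.left e ∈ X ↔ G.right e ∈ X) →
      G.tail e ∈ Vor ∧ G.head e ∈ Vor := by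
    intro e hcr
    rcases hcrossT e hcr with heT | hreT | rfl | rfl
    · rcases hTcross e heT hcr with hsp | hsp
      · exact ends_in_Vor hd hv hpart hVor hVtail hsp
      · exact ends_in_Vor hd hv hpart hVor hVhead hsp
    · have hcr' : ¬ (G.left (G.rev e) ∈ X ↔ G.right (G.rev e) ∈ X) :=
        (hcross_rev e).2 hcr
      have hres : G.tail (G.rev e) ∈ Vor ∧ G.head (G.rev e) ∈ Vor := by
        rcases hTcross (G.rev e) hreT hcr' with hsp | hsp
        · exact ends_in_Vor hd hv hpart hVor hVtail hsp
        · exact ends_in_Vor hd hv hpart hVor hVhead hsp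
      rw [hrev_tail, hrev_head] at hres
      exact ⟨hres.2, hres.1⟩
    · exact ⟨hVtail, hVhead⟩
    · rw [hrev_tail, hrev_head]
      exact ⟨hVhead, hVtail⟩
  -- dart-transitivity of the map (needed for single rotation orbits)
  have hstep_rev : ∀ e : G.A, Relation.EqvGen (pairRel G.rot G.revPerm) e (G.rev e) :=
    fun e => Relation.EqvGen.rel _ _ (Or.inr rfl)
  have hstep_rot : ∀ e : G.A, Relation.EqvGen (pairRel G.rot G.revPerm) e (G.rot e) :=
    fun e => Relation.EqvGen.rel _ _ (Or.inl rfl)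
  have hface : ∀ e e' : G.A, G.left e = G.left e' →
      Relation.EqvGen (pairRel G.rot G.revPerm) e e' := by
    intro e e' hle
    obtain ⟨n, hn⟩ := G.face_orbit e e' hle
    subst hn
    clear hle
    induction n with
    | zero => exact Relation.EqvGen.refl e
    | succ m ih =>
      rw [Function.iterate_succ_apply']
      exact Relation.EqvGen.trans _ _ _ ih
        (Relation.EqvGen.trans _ _ _ (hstep_rev _) (hstep_rot _))
  have hreach : ∀ (p : List G.A) (ψ φ : G.F), G.IsDualWalk Tstar p ψ φ →
      ∀ e' e : G.A, G.left e' = ψ → G.left e = φ →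
      Relation.EqvGen (pairRel G.rot G.revPerm) e' e := by
    intro p
    induction p with
    | nil =>
      intro ψ φ hwalk e' e h1 h2
      have : ψ = φ := isDualWalk_nil_iff.1 hwalk
      exact hface e' e (by rw [h1, h2, this])
    | cons c p' ih =>
      intro ψ φ hwalk e' e h1 h2
      obtain ⟨hcs, hct, hrest⟩ := hwalk
      have s1 : Relation.EqvGen (pairRel G.rot G.revPerm) e' c :=
        hface e' c (by rw [h1, ← hct]; rfl)
      have s2 := hstep_rev c
      have s3 : Relation.EqvGen (pairRel G.rot G.revPerm) (G.rev c) e :=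
        ih (G.dualHead c) φ hrest (G.rev c) e rfl h2
      exact Relation.EqvGen.trans _ _ _ (Relation.EqvGen.trans _ _ _ s1 s2) s3
  have htransA : ∀ g g' : G.A, Relation.EqvGen (pairRel G.rot G.revPerm) g g' := by
    obtain ⟨g₀, hg₀⟩ := G.left_surjective hinf
    intro g g'
    have r1 : Relation.EqvGen (pairRel G.rot G.revPerm) g₀ g :=
      hreach (W (G.left g)) hinf (G.left g) (hW (G.left g)) g₀ g hg₀ rfl
    have r2 : Relation.EqvGen (pairRel G.rot G.revPerm) g₀ g' :=
      hreach (W (G.left g')) hinf (G.left g') (hW (G.left g')) g₀ g' hg₀ rfl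
    exact Relation.EqvGen.trans _ _ _ (Relation.EqvGen.symm _ _ r1) r2
  -- side constancy at non-Vor vertices
  have hsideConst : ∀ u : G.V, u ∉ Vor → ∀ g g' : G.A, G.tail g = u → G.tail g' = u →
      (G.left g ∈ X ↔ G.left g' ∈ X) := by
    intro u hu g g' hg hg'
    have hsc := G.single_orbit htransA (hg.trans hg'.symm)
    obtain ⟨n, hn⟩ := sameCycle_exists_nat hsc
    have key : ∀ m : ℕ, (G.left g ∈ X ↔ G.left ((G.rot ^ m) g) ∈ X) := by
      intro m
      induction m with
      | zero => simp
      | succ k ihk =>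
        have hnc : ¬ ¬ (G.left ((G.rot ^ k) g) ∈ X ↔ G.right ((G.rot ^ k) g) ∈ X) := by
          intro hcr
          have := (hcross_ends _ hcr).1
          rw [tail_pow_rot, hg] at this
          exact hu this
        rw [not_not] at hnc
        have hpow : (G.rot ^ (k + 1)) g = G.rot ((G.rot ^ k) g) := by
          rw [pow_succ', Equiv.Perm.mul_apply]
        rw [hpow, hlrot]
        exact ihk.trans hnc
    rw [← hn]
    exact key n
  -- propagation along the component K
  obtain ⟨x, hxV, hKdef⟩ := hK
  have hchain : ∀ y : G.V,
      Relation.ReflTransGen (fun p q => p ∉ Vor ∧ q ∉ Vor ∧ ∃ e : G.A,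
        G.tail e = p ∧ G.head e = q) x y →
      ∀ gx gy : G.A, G.tail gx = x → G.tail gy = y →
      (G.left gx ∈ X ↔ G.left gy ∈ X) := by
    intro y hy
    induction hy with
    | refl =>
      intro gx gy h1 h2
      exact hsideConst x hxV gx gy h1 h2
    | tail hxb hby ih =>
      intro gx gy h1 h2
      obtain ⟨hbV, hcV, e, he1, he2⟩ := hby
      have i1 := ih gx e h1 he1
      have i2 : G.left (G.rot (G.rev e)) = G.left e := G.left_faceNext e
      have i3 := hsideConst _ hcV (G.rot (G.rev e)) gy
        (by rw [G.tail_rot, G.tail_rev, he2]) h2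
      rw [i2] at i3
      exact i1.trans i3
  -- the witnesses
  have hbC' : G.tail b ∈ Vor ∧ G.head b ∈ K := by
    rw [hC] at hbC
    exact hbC
  have hheadbK : G.head b ∈ K := hbC'.2
  obtain ⟨w, ⟨gw, hgwt, hgwl⟩, hwK⟩ := henc
  -- a dart at head b whose left face is dualHead a (which is in X)
  have hg₁ : ∃ g₁ : G.A, G.tail g₁ = G.head b ∧ G.left g₁ = G.dualHead a := by
    rcases hbInc with hbl | hbr
    · refine ⟨G.rot (G.rev b), ?_, ?_⟩
      · rw [G.tail_rot, G.tail_rev]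
      · rw [G.left_faceNext]; exact hbl
    · exact ⟨G.rev b, G.tail_rev b, hbr⟩
  obtain ⟨g₁, hg₁t, hg₁l⟩ := hg₁
  have hRTGk : Relation.ReflTransGen (fun p q => p ∉ Vor ∧ q ∉ Vor ∧ ∃ e : G.A,
      G.tail e = p ∧ G.head e = q) x (G.head b) := by
    have := hheadbK
    rw [hKdef] at this
    exact this
  have hRTGw : Relation.ReflTransGen (fun p q => p ∉ Vor ∧ q ∉ Vor ∧ ∃ e : G.A,
      G.tail e = p ∧ G.head e = q) x w := by
    have := hwK
    rw [hKdef] at this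
    exact this
  -- a dart at x
  have hgx : ∃ gx : G.A, G.tail gx = x := by
    rcases hRTGk.cases_head with heq | ⟨c, ⟨_, _, e0, he0t, _⟩, _⟩
    · exact ⟨g₁, by rw [hg₁t, ← heq]⟩
    · exact ⟨e0, he0t⟩
  obtain ⟨gx, hgxt⟩ := hgx
  have iff1 := hchain (G.head b) hRTGk gx g₁ hgxt hg₁t
  have iff2 := hchain w hRTGw gx gw hgxt hgwt
  have hg₁X : G.left g₁ ∈ X := by rw [hg₁l]; exact hXhead
  have hgwX : G.left gw ∈ X := iff2.1 (iff1.2 hg₁X)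
  rw [hgwl] at hgwX
  exact hh hgwX
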